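/- Let E be a finite ground set with |E| = n, let s range over a finite set of scenarios with probabilities p_s ≥ 0 summing to 1, and for each scenario s let g_s be a polymatroid rank function on E. Consider the achievable set A = { Σ_s p_s u_s : u_s ∈ B(g_s) for each s } ⊆ ℝ^E (the set of expected utility vectors of full-revelation signaling policies). Then there exists u ∈ A such that for every a ∈ A and every k ∈ {1, …, n}, Q_k(u) ≥ Q_k(a); that is, A contains a 1-majorized point. -/

import Mathlib

/-- The independence polytope of a set function on a finite ground set. -/
def indepP {E : Type*} [Fintype E] (f : Finset E → ℝ) : Set (E → ℝ) :=
  {x | (∀ i, 0 ≤ x i) ∧ ∀ S : Finset E, ∑ i ∈ S, x i ≤ f S}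

/-- The base polytope of a set function on a finite ground set. -/
def baseB {E : Type*} [Fintype E] (f : Finset E → ℝ) : Set (E → ℝ) :=
  {x ∈ indepP f | ∑ i, x i = f Finset.univ}

/-- `Qk x k` is the sum of the `k` smallest coordinates of `x`, i.e. the least
coordinate sum over subsets of size `k`. -/
noncomputable def Qk {E : Type*} [Fintype E] (x : E → ℝ) (k : ℕ) : ℝ :=
  sInf {s : ℝ | ∃ S : Finset E, S.card = k ∧ s = ∑ i ∈ S, x i}

section Aux

open Finset

variable {E : Type*} [Fintype E] [DecidableEq E]

/-! ### Facts about `Qk` -/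

lemma Qk_set_eq (x : E → ℝ) (k : ℕ) :
    {s : ℝ | ∃ S : Finset E, S.card = k ∧ s = ∑ i ∈ S, x i} =
      ↑((Finset.powersetCard k (Finset.univ : Finset E)).image fun S => ∑ i ∈ S, x i) := by
  ext s
  simp only [Set.mem_setOf_eq, coe_image, Set.mem_image, mem_coe,
    Finset.mem_powersetCard_univ]
  constructor
  · rintro ⟨S, h1, h2⟩; exact ⟨S, h1, h2.symm⟩
  · rintro ⟨S, h1, h2⟩; exact ⟨S, h1, h2.symm⟩

lemma Qk_le (x : E → ℝ) {k : ℕ} {S : Finset E} (hS : S.card = k) :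
    Qk x k ≤ ∑ i ∈ S, x i := by
  have hbdd : BddBelow {s : ℝ | ∃ S : Finset E, S.card = k ∧ s = ∑ i ∈ S, x i} := by
    rw [Qk_set_eq]
    exact Finset.bddBelow _
  exact csInf_le hbdd ⟨S, hS, rfl⟩

lemma Qk_exists (x : E → ℝ) {k : ℕ} (hk : k ≤ Fintype.card E) :
    ∃ S : Finset E, S.card = k ∧ Qk x k = ∑ i ∈ S, x i := by
  obtain ⟨S0, _, hS0⟩ := Finset.exists_subset_card_eq (s := (Finset.univ : Finset E)) (n := k)
    (by simpa using hk)
  have hne : {s : ℝ | ∃ S : Finset E, S.card = k ∧ s = ∑ i ∈ S, x i}.Nonempty :=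
    ⟨∑ i ∈ S0, x i, S0, hS0, rfl⟩
  have hfin : {s : ℝ | ∃ S : Finset E, S.card = k ∧ s = ∑ i ∈ S, x i}.Finite := by
    rw [Qk_set_eq]; exact Finset.finite_toSet _
  obtain ⟨S, hScard, hSeq⟩ := hne.csInf_mem hfin
  exact ⟨S, hScard, hSeq⟩

/-! ### The greedy vector -/

/-- Prefix set of the first `t` elements under the enumeration `e`. -/
def pre (e : Fin (Fintype.card E) ≃ E) (t : ℕ) : Finset E :=
  Finset.univ.filter (fun i => ((e.symm i : Fin (Fintype.card E)) : ℕ) < t)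

/-- The greedy vector for `f` along the enumeration `e`. -/
noncomputable def gr (f : Finset E → ℝ) (e : Fin (Fintype.card E) ≃ E) : E → ℝ :=
  fun i => f (pre e ((e.symm i : ℕ) + 1)) - f (pre e (e.symm i))

lemma mem_pre {e : Fin (Fintype.card E) ≃ E} {t : ℕ} {i : E} :
    i ∈ pre e t ↔ ((e.symm i : ℕ) < t) := by simp [pre]

lemma pre_mono (e : Fin (Fintype.card E) ≃ E) {s t : ℕ} (h : s ≤ t) :
    pre e s ⊆ pre e t := fun i hi => mem_pre.2 (lt_of_lt_of_le (mem_pre.1 hi) h)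

lemma pre_zero (e : Fin (Fintype.card E) ≃ E) : pre e 0 = ∅ := by
  ext i; simp [mem_pre]

lemma pre_of_ge (e : Fin (Fintype.card E) ≃ E) {t : ℕ} (h : Fintype.card E ≤ t) :
    pre e t = Finset.univ := by
  ext i; simp only [mem_pre, Finset.mem_univ, iff_true]
  exact lt_of_lt_of_le (e.symm i).isLt h

lemma pre_succ (e : Fin (Fintype.card E) ≃ E) (t : Fin (Fintype.card E)) :
    pre e ((t : ℕ) + 1) = insert (e t) (pre e t) := by
  ext i
  simp only [mem_pre, Finset.mem_insert]
  rw [Nat.lt_succ_iff_lt_or_eq]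
  constructor
  · rintro (h | h)
    · exact Or.inr h
    · have hst : e.symm i = t := Fin.ext h
      exact Or.inl (by rw [← hst, Equiv.apply_symm_apply])
  · rintro (h | h)
    · exact Or.inr (by rw [h, Equiv.symm_apply_apply])
    · exact Or.inl h

lemma not_mem_pre_self (e : Fin (Fintype.card E) ≃ E) (t : Fin (Fintype.card E)) :
    e t ∉ pre e t := by
  simp [mem_pre]

lemma gr_nonneg (f : Finset E → ℝ)
    (hmono : ∀ A B : Finset E, A ⊆ B → f A ≤ f B)
    (e : Fin (Fintype.card E) ≃ E) (i : E) : 0 ≤ gr f e i :=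
  sub_nonneg.2 (hmono _ _ (pre_mono e (Nat.le_succ _)))

lemma sum_pre_gr (f : Finset E → ℝ) (hf0 : f ∅ = 0)
    (e : Fin (Fintype.card E) ≃ E) :
    ∀ t : ℕ, ∑ i ∈ pre e t, gr f e i = f (pre e t) := by
  intro t
  induction t with
  | zero => rw [pre_zero, Finset.sum_empty, hf0]
  | succ t ih =>
    by_cases h : t < Fintype.card E
    · have hsucc : pre e (t + 1) = insert (e ⟨t, h⟩) (pre e t) := pre_succ e ⟨t, h⟩
      rw [hsucc, Finset.sum_insert (not_mem_pre_self e ⟨t, h⟩), ih, ← hsucc]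
      have : gr f e (e ⟨t, h⟩) = f (pre e (t + 1)) - f (pre e t) := by
        simp [gr, Equiv.symm_apply_apply]
      rw [this]; ring
    · push_neg at h
      rw [pre_of_ge e (le_trans h (Nat.le_succ t)), pre_of_ge e h] at *
      exact ih

lemma gr_indep (f : Finset E → ℝ) (hf0 : f ∅ = 0)
    (hmono : ∀ A B : Finset E, A ⊆ B → f A ≤ f B)
    (hsub : ∀ A B : Finset E, f (A ∪ B) + f (A ∩ B) ≤ f A + f B)
    (e : Fin (Fintype.card E) ≃ E) :
    ∀ S : Finset E, ∑ i ∈ S, gr f e i ≤ f S := by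
  intro S
  induction S using Finset.strongInduction with
  | _ S ih =>
    rcases S.eq_empty_or_nonempty with rfl | hne
    · simp [hf0]
    · obtain ⟨i0, hi0, hmax⟩ := S.exists_max_image (fun i => ((e.symm i : ℕ))) hne
      set t : Fin (Fintype.card E) := e.symm i0 with ht
      have hi0t : e t = i0 := by rw [ht, Equiv.apply_symm_apply]
      have hSsub : ∑ i ∈ S, gr f e i = gr f e i0 + ∑ i ∈ S.erase i0, gr f e i :=
        (Finset.add_sum_erase _ _ hi0).symm
      have hih : ∑ i ∈ S.erase i0, gr f e i ≤ f (S.erase i0) :=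
        ih _ (Finset.erase_ssubset hi0)
      -- S ∩ pre e t = S.erase i0
      have hinter : S ∩ pre e t = S.erase i0 := by
        ext j
        simp only [Finset.mem_inter, mem_pre, Finset.mem_erase]
        constructor
        · rintro ⟨hj, hlt⟩
          refine ⟨fun hji => ?_, hj⟩
          subst hji; omega
        · rintro ⟨hji, hj⟩
          refine ⟨hj, ?_⟩
          have hle : (e.symm j : ℕ) ≤ (t : ℕ) := hmax j hj
          have : e.symm j ≠ t := by
            intro hEq
            apply hji
            have := congrArg e hEq
            rwa [Equiv.apply_symm_apply, hi0t] at this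
          have hne' : ((e.symm j : ℕ)) ≠ (t : ℕ) := fun hvv => this (Fin.ext hvv)
          omega
      have hcup : pre e ((t : ℕ) + 1) ⊆ S ∪ pre e t := by
        rw [pre_succ]
        intro j hj
        rcases Finset.mem_insert.1 hj with hj | hj
        · exact Finset.mem_union.2 (Or.inl (by rwa [hj, hi0t]))
        · exact Finset.mem_union.2 (Or.inr hj)
      have hkey : gr f e i0 ≤ f S - f (S.erase i0) := by
        have h1 : f (pre e ((t : ℕ) + 1)) ≤ f (S ∪ pre e t) := hmono _ _ hcup
        have h2 : f (S ∪ pre e t) + f (S ∩ pre e t) ≤ f S + f (pre e t) := hsub _ _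
        rw [hinter] at h2
        have hgr : gr f e i0 = f (pre e ((t : ℕ) + 1)) - f (pre e t) := by
          simp [gr, ht]
        rw [hgr]; linarith
      linarith [hih, hkey, hSsub.ge, hSsub.le]

lemma gr_mem_base (f : Finset E → ℝ) (hf0 : f ∅ = 0)
    (hmono : ∀ A B : Finset E, A ⊆ B → f A ≤ f B)
    (hsub : ∀ A B : Finset E, f (A ∪ B) + f (A ∩ B) ≤ f A + f B)
    (e : Fin (Fintype.card E) ≃ E) :
    gr f e ∈ baseB f := by
  refine ⟨⟨gr_nonneg f hmono e, gr_indep f hf0 hmono hsub e⟩, ?_⟩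
  have := sum_pre_gr f hf0 e (Fintype.card E)
  rwa [pre_of_ge e le_rfl] at this

lemma gr_opt (f : Finset E → ℝ) (hf0 : f ∅ = 0)
    (e : Fin (Fintype.card E) ≃ E) (w : E → ℝ)
    (hw : ∀ s t : Fin (Fintype.card E), s ≤ t → w (e t) ≤ w (e s))
    {x : E → ℝ} (hx : x ∈ baseB f) :
    ∑ i, w i * x i ≤ ∑ i, w i * gr f e i := by
  have claim : ∀ m : ℕ, ∀ h : m < Fintype.card E,
      w (e ⟨m, h⟩) * (f (pre e (m + 1)) - ∑ i ∈ pre e (m + 1), x i) ≤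
        ∑ i ∈ pre e (m + 1), w i * (gr f e i - x i) := by
    intro m
    induction m with
    | zero =>
      intro h
      have h1 : pre e (0 + 1) = insert (e ⟨0, h⟩) (pre e 0) := pre_succ e ⟨0, h⟩
      rw [h1, pre_zero, insert_empty_eq, Finset.sum_singleton, Finset.sum_singleton]
      have hgr : gr f e (e ⟨0, h⟩) = f (pre e 1) - f (pre e 0) := by
        simp [gr, Equiv.symm_apply_apply]
      rw [hgr, pre_zero, hf0, h1, pre_zero, insert_empty_eq]
      ring_nf
      exact le_rfl
    | succ m ihm =>
      intro h
      have hm : m < Fintype.card E := Nat.lt_of_succ_lt h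
      have ih := ihm hm
      have hsucc : pre e (m + 1 + 1) = insert (e ⟨m + 1, h⟩) (pre e (m + 1)) :=
        pre_succ e ⟨m + 1, h⟩
      have hnotmem : e ⟨m + 1, h⟩ ∉ pre e (m + 1) := not_mem_pre_self e ⟨m + 1, h⟩
      have hgr : gr f e (e ⟨m + 1, h⟩) = f (pre e (m + 1 + 1)) - f (pre e (m + 1)) := by
        simp [gr, Equiv.symm_apply_apply]
    -- feasibility of x on the prefix
      have hfeas : ∑ i ∈ pre e (m + 1), x i ≤ f (pre e (m + 1)) := hx.1.2 _
      have hwle : w (e ⟨m + 1, h⟩) ≤ w (e ⟨m, hm⟩) := by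
        refine hw ⟨m, hm⟩ ⟨m + 1, h⟩ ?_
        exact Nat.le_succ m
      rw [hsucc, Finset.sum_insert hnotmem, Finset.sum_insert hnotmem, ← hsucc]
      have step1 : w (e ⟨m + 1, h⟩) * (f (pre e (m + 1)) - ∑ i ∈ pre e (m + 1), x i) ≤
          w (e ⟨m, hm⟩) * (f (pre e (m + 1)) - ∑ i ∈ pre e (m + 1), x i) := by
        apply mul_le_mul_of_nonneg_right hwle
        linarith
      rw [hgr]
      nlinarith [ih, step1]
  rcases Nat.eq_zero_or_pos (Fintype.card E) with hzero | hpos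
  · have huniv : (Finset.univ : Finset E) = ∅ :=
      Finset.card_eq_zero.1 (by rw [Finset.card_univ, hzero])
    rw [huniv]; simp
  · have h := claim (Fintype.card E - 1) (by omega)
    have hpre : pre e ((Fintype.card E - 1) + 1) = Finset.univ := pre_of_ge e (by omega)
    rw [hpre] at h
    have hxtot : ∑ i, x i = f Finset.univ := hx.2
    have hsplit : ∑ i, w i * (gr f e i - x i) = ∑ i, w i * gr f e i - ∑ i, w i * x i := by
      rw [← Finset.sum_sub_distrib]
      exact Finset.sum_congr rfl fun i _ => by ring
    rw [hsplit] at h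
    have h0 : f Finset.univ - ∑ i, x i = 0 := by rw [hxtot]; ring
    rw [h0, mul_zero] at h
    linarith

/-! ### Exchange properties of the min-norm point -/

lemma exchange_le (f : Finset E → ℝ) {u : E → ℝ} (hu : u ∈ baseB f)
    (hmin : ∀ y ∈ baseB f, ∑ i, (u i) ^ 2 ≤ ∑ i, (y i) ^ 2)
    (i j : E) (hij : j ≠ i)
    (hminimal : ∀ S : Finset E, i ∈ S → (∑ t ∈ S, u t = f S) → j ∈ S)
    (hj : 0 < u j) : u j ≤ u i := by
  by_contra hlt
  push_neg at hlt
  set C : Finset (Finset E) :=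
    Finset.univ.powerset.filter (fun S => i ∈ S ∧ j ∉ S) with hC
  have hCne : C.Nonempty := by
    refine ⟨{i}, Finset.mem_filter.2 ⟨Finset.mem_powerset.2 (Finset.subset_univ _),
      Finset.mem_singleton_self i, ?_⟩⟩
    simp only [Finset.mem_singleton]
    exact hij
  set slack : Finset E → ℝ := fun S => f S - ∑ t ∈ S, u t with hslack
  set δ : ℝ := C.inf' hCne slack with hδ
  have hδpos : 0 < δ := by
    rw [hδ, Finset.lt_inf'_iff]
    intro S hS
    simp only [hC, Finset.mem_filter] at hS
    obtain ⟨-, hiS, hjS⟩ := hS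
    have hle : ∑ t ∈ S, u t ≤ f S := hu.1.2 S
    have hne : ∑ t ∈ S, u t ≠ f S := fun hEq => hjS (hminimal S hiS hEq)
    simp only [hslack]
    have := lt_of_le_of_ne hle hne
    linarith
  set ε : ℝ := min (min δ (u j)) ((u j - u i) / 2) with hε
  have hεpos : 0 < ε := by
    apply lt_min (lt_min hδpos hj)
    linarith
  have hεδ : ε ≤ δ := le_trans (min_le_left _ _) (min_le_left _ _)
  have hεuj : ε ≤ u j := le_trans (min_le_left _ _) (min_le_right _ _)
  have hεji : ε ≤ (u j - u i) / 2 := min_le_right _ _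
  set u' : E → ℝ := fun t => u t + (if t = i then ε else 0) - (if t = j then ε else 0)
    with hu'
  have hsum : ∀ S : Finset E, ∑ t ∈ S, u' t =
      ∑ t ∈ S, u t + (if i ∈ S then ε else 0) - (if j ∈ S then ε else 0) := by
    intro S
    simp only [hu']
    rw [Finset.sum_sub_distrib, Finset.sum_add_distrib]
    congr 1
    · congr 1
      exact Finset.sum_ite_eq' S i (fun _ => ε)
    · exact Finset.sum_ite_eq' S j (fun _ => ε)
  have hu'B : u' ∈ baseB f := by
    refine ⟨⟨?_, ?_⟩, ?_⟩
    · intro t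
      by_cases htj : t = j
      · subst htj
        have huj' : u' t = u t - ε := by simp [hu', hij]
        rw [huj']
        linarith [hεuj]
      · simp only [hu', if_neg htj]
        have h0 : (0:ℝ) ≤ if t = i then ε else 0 := by positivity
        have := hu.1.1 t
        linarith
    · intro S
      rw [hsum S]
      by_cases hiS : i ∈ S
      · by_cases hjS : j ∈ S
        · simp only [if_pos hiS, if_pos hjS]
          have := hu.1.2 S
          linarith
        · simp only [if_pos hiS, if_neg hjS]
          have hSC : S ∈ C := by
            simp only [hC, Finset.mem_filter, Finset.mem_powerset]
            exact ⟨Finset.subset_univ S, hiS, hjS⟩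
          have hsl : δ ≤ slack S := Finset.inf'_le slack hSC
          simp only [hslack] at hsl
          linarith
      · simp only [if_neg hiS]
        have := hu.1.2 S
        have h0 : (0:ℝ) ≤ if j ∈ S then ε else 0 := by positivity
        linarith
    · rw [hsum Finset.univ]
      simp only [Finset.mem_univ, if_pos]
      rw [hu.2]; ring
  have hcmp := hmin u' hu'B
  have hij' : i ≠ j := Ne.symm hij
  have hdiff : ∑ t, ((u' t) ^ 2 - (u t) ^ 2) = 2 * ε * (u i - u j) + 2 * ε ^ 2 := by
    have hzero : ∀ t ∈ Finset.univ, t ∉ ({i, j} : Finset E) →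
        (u' t) ^ 2 - (u t) ^ 2 = 0 := by
      intro t _ ht
      simp only [Finset.mem_insert, Finset.mem_singleton, not_or] at ht
      simp only [hu', if_neg ht.1, if_neg ht.2]
      ring
    have h1 : ∑ t, ((u' t) ^ 2 - (u t) ^ 2) =
        ∑ t ∈ ({i, j} : Finset E), ((u' t) ^ 2 - (u t) ^ 2) :=
      (Finset.sum_subset (Finset.subset_univ _) hzero).symm
    have h2 : ∑ t ∈ ({i, j} : Finset E), ((u' t) ^ 2 - (u t) ^ 2) =
        ((u' i) ^ 2 - (u i) ^ 2) + ((u' j) ^ 2 - (u j) ^ 2) := Finset.sum_pair hij'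
    have hui : u' i = u i + ε := by simp [hu', hij']
    have huj : u' j = u j - ε := by simp [hu', hij]
    rw [h1, h2, hui, huj]
    ring
  have hdiff2 : ∑ t, (u' t) ^ 2 - ∑ t, (u t) ^ 2 = 2 * ε * (u i - u j) + 2 * ε ^ 2 := by
    rw [← Finset.sum_sub_distrib]
    exact hdiff
  have hneg : 2 * ε * (u i - u j) + 2 * ε ^ 2 < 0 := by nlinarith
  linarith

/-- Every "strict lower level set" of the squared-norm minimizer over `baseB f`
is tight. -/
lemma level_tight (f : Finset E → ℝ) (hf0 : f ∅ = 0)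
    (hsub : ∀ A B : Finset E, f (A ∪ B) + f (A ∩ B) ≤ f A + f B)
    {u : E → ℝ} (hu : u ∈ baseB f)
    (hmin : ∀ y ∈ baseB f, ∑ i, (u i) ^ 2 ≤ ∑ i, (y i) ^ 2)
    (L : Finset E) (hL : ∀ i ∈ L, ∀ j ∉ L, u i < u j) :
    ∑ t ∈ L, u t = f L := by
  -- tightness is preserved by unions and intersections
  have tight_inter_union : ∀ A B : Finset E,
      (∑ t ∈ A, u t = f A) → (∑ t ∈ B, u t = f B) →
      (∑ t ∈ A ∪ B, u t = f (A ∪ B)) ∧ (∑ t ∈ A ∩ B, u t = f (A ∩ B)) := by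
    intro A B hA hB
    have hsum : ∑ t ∈ A ∪ B, u t + ∑ t ∈ A ∩ B, u t = ∑ t ∈ A, u t + ∑ t ∈ B, u t :=
      Finset.sum_union_inter
    have h1 : ∑ t ∈ A ∪ B, u t ≤ f (A ∪ B) := hu.1.2 _
    have h2 : ∑ t ∈ A ∩ B, u t ≤ f (A ∩ B) := hu.1.2 _
    have h3 : f (A ∪ B) + f (A ∩ B) ≤ f A + f B := hsub A B
    constructor <;> linarith
  -- every element of L lies in a tight subset of L
  have hT : ∀ i ∈ L, ∃ T : Finset E, i ∈ T ∧ T ⊆ L ∧ ∑ t ∈ T, u t = f T := by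
    intro i hiL
    set 𝒯 : Finset (Finset E) :=
      Finset.univ.powerset.filter (fun S => i ∈ S ∧ ∑ t ∈ S, u t = f S) with h𝒯
    have h𝒯ne : 𝒯.Nonempty := by
      refine ⟨Finset.univ, ?_⟩
      simp only [h𝒯, Finset.mem_filter, Finset.mem_powerset]
      exact ⟨Finset.Subset.refl _, Finset.mem_univ i, hu.2⟩
    obtain ⟨T, hT𝒯, hTmin⟩ := Finset.exists_min_image 𝒯 Finset.card h𝒯ne
    simp only [h𝒯, Finset.mem_filter, Finset.mem_powerset] at hT𝒯
    obtain ⟨-, hiT, hTtight⟩ := hT𝒯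
    -- T is contained in every tight set containing i
    have hTsub : ∀ S : Finset E, i ∈ S → (∑ t ∈ S, u t = f S) → T ⊆ S := by
      intro S hiS hStight
      have hTS : ∑ t ∈ T ∩ S, u t = f (T ∩ S) :=
        (tight_inter_union T S hTtight hStight).2
      have hTSmem : T ∩ S ∈ 𝒯 := by
        simp only [h𝒯, Finset.mem_filter, Finset.mem_powerset]
        exact ⟨Finset.subset_univ _, Finset.mem_inter.2 ⟨hiT, hiS⟩, hTS⟩
      have hcard : T.card ≤ (T ∩ S).card := hTmin _ hTSmem
      have heq : T ∩ S = T :=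
        Finset.eq_of_subset_of_card_le (Finset.inter_subset_left) hcard
      rw [← heq]
      exact Finset.inter_subset_right
    -- T ⊆ L, else the exchange lemma gives a contradiction
    refine ⟨T, hiT, ?_, hTtight⟩
    intro j hjT
    by_contra hjL
    have hij : j ≠ i := fun hEq => hjL (hEq ▸ hiL)
    have hjpos : 0 < u j := lt_of_le_of_lt (hu.1.1 i) (hL i hiL j hjL)
    have := exchange_le f hu hmin i j hij
      (fun S hiS hStight => hTsub S hiS hStight hjT) hjpos
    exact absurd (hL i hiL j hjL) (not_lt.2 this)
  -- take the union of the tight subsets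
  have hunion : ∀ s : Finset E, s ⊆ L →
      ∃ U : Finset E, s ⊆ U ∧ U ⊆ L ∧ ∑ t ∈ U, u t = f U := by
    intro s
    induction s using Finset.induction_on with
    | empty =>
      intro _
      exact ⟨∅, Finset.Subset.refl _, Finset.empty_subset _, by simp [hf0]⟩
    | @insert a s ha ih =>
      intro hsub'
      obtain ⟨U, hsU, hUL, hUtight⟩ := ih (Finset.Subset.trans (Finset.subset_insert _ _) hsub')
      obtain ⟨T, haT, hTL, hTtight⟩ := hT a (hsub' (Finset.mem_insert_self a s))
      refine ⟨T ∪ U, ?_, Finset.union_subset hTL hUL,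
        (tight_inter_union T U hTtight hUtight).1⟩
      intro b hb
      rcases Finset.mem_insert.1 hb with rfl | hb
      · exact Finset.mem_union.2 (Or.inl haT)
      · exact Finset.mem_union.2 (Or.inr (hsU hb))
  obtain ⟨U, hLU, hUL, hUtight⟩ := hunion L (Finset.Subset.refl L)
  have : U = L := Finset.Subset.antisymm hUL hLU
  rwa [this] at hUtight

/-! ### Averaging over subsets -/

lemma sum_powersetCard_sum (W : Finset E) (a : E → ℝ) (j : ℕ) :
    ∑ T ∈ Finset.powersetCard (j + 1) W, ∑ i ∈ T, a i =
      ((W.card - 1).choose j : ℝ) * ∑ i ∈ W, a i := by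
  have h1 : ∀ T ∈ Finset.powersetCard (j + 1) W,
      ∑ i ∈ T, a i = ∑ i ∈ W, (if i ∈ T then a i else 0) := by
    intro T hT
    have hTW : T ⊆ W := (Finset.mem_powersetCard.1 hT).1
    rw [Finset.sum_ite_mem, Finset.inter_eq_right.2 hTW]
  rw [Finset.sum_congr rfl h1, Finset.sum_comm]
  have h2 : ∀ i ∈ W, ∑ T ∈ Finset.powersetCard (j + 1) W, (if i ∈ T then a i else 0) =
      ((W.card - 1).choose j : ℝ) * a i := by
    intro i hi
    rw [Finset.sum_ite, Finset.sum_const_zero, add_zero, Finset.sum_const]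
    have hcard : (Finset.filter (fun T => i ∈ T) (Finset.powersetCard (j + 1) W)).card =
        ((W.erase i).powersetCard j).card := by
      refine Finset.card_nbij' (fun T => T.erase i) (fun T' => insert i T')
        ?_ ?_ ?_ ?_
      · intro T hT
        simp only [Finset.mem_coe, Finset.mem_filter, Finset.mem_powersetCard] at hT
        obtain ⟨⟨hTW, hTcard⟩, hiT⟩ := hT
        simp only [Finset.mem_coe, Finset.mem_powersetCard]
        constructor
        · exact fun x hx => Finset.mem_erase.2
            ⟨(Finset.mem_erase.1 hx).1, hTW (Finset.mem_erase.1 hx).2⟩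
        · rw [Finset.card_erase_of_mem hiT, hTcard]
          omega
      · intro T' hT'
        rw [Finset.mem_coe, Finset.mem_powersetCard] at hT'
        obtain ⟨hT'W, hT'card⟩ := hT'
        have hiT' : i ∉ T' := fun hx => (Finset.mem_erase.1 (hT'W hx)).1 rfl
        simp only [Finset.mem_coe, Finset.mem_filter, Finset.mem_powersetCard]
        refine ⟨⟨?_, ?_⟩, Finset.mem_insert_self _ _⟩
        · intro x hx
          rcases Finset.mem_insert.1 hx with rfl | hx
          · exact hi
          · exact Finset.erase_subset _ _ (hT'W hx)
        · rw [Finset.card_insert_of_notMem hiT', hT'card]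
      · intro T hT
        simp only [Finset.mem_coe, Finset.mem_filter] at hT
        exact Finset.insert_erase hT.2
      · intro T' hT'
        rw [Finset.mem_coe, Finset.mem_powersetCard] at hT'
        have hiT' : i ∉ T' := fun hx => (Finset.mem_erase.1 (hT'.1 hx)).1 rfl
        exact Finset.erase_insert hiT'
    rw [hcard, Finset.card_powersetCard, Finset.card_erase_of_mem hi]
    simp [nsmul_eq_mul]
  rw [Finset.sum_congr rfl h2, ← Finset.mul_sum]

lemma min_subset_avg (W : Finset E) (a : E → ℝ) (j : ℕ)
    (T : Finset E) (hTmem : T ∈ Finset.powersetCard j W)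
    (hmin : ∀ T' ∈ Finset.powersetCard j W, ∑ i ∈ T, a i ≤ ∑ i ∈ T', a i) :
    (W.card : ℝ) * ∑ i ∈ T, a i ≤ (j : ℝ) * ∑ i ∈ W, a i := by
  rcases j with _ | j'
  · have hT0 : T = ∅ := Finset.card_eq_zero.1 (Finset.mem_powersetCard.1 hTmem).2
    simp [hT0]
  · have hjW : j' + 1 ≤ W.card := by
      have := (Finset.mem_powersetCard.1 hTmem)
      rw [← this.2]
      exact Finset.card_le_card this.1
    have hM : 1 ≤ W.card := le_trans (Nat.succ_le_succ (Nat.zero_le _)) hjW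
    have hcount : ((Finset.powersetCard (j' + 1) W).card : ℝ) * ∑ i ∈ T, a i ≤
        ∑ T' ∈ Finset.powersetCard (j' + 1) W, ∑ i ∈ T', a i := by
      have := Finset.card_nsmul_le_sum (Finset.powersetCard (j' + 1) W)
        (fun T' => ∑ i ∈ T', a i) (∑ i ∈ T, a i) hmin
      rwa [nsmul_eq_mul] at this
    rw [sum_powersetCard_sum W a j', Finset.card_powersetCard] at hcount
    have hid : (j' + 1) * (W.card).choose (j' + 1) = W.card * (W.card - 1).choose j' := by
      have hch := Nat.add_one_mul_choose_eq (W.card - 1) j'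
      have hMs : (W.card - 1) + 1 = W.card := Nat.succ_pred_eq_of_pos hM
      rw [hMs] at hch
      rw [mul_comm]
      exact hch.symm
    have hCpos : 0 < ((W.card - 1).choose j' : ℝ) := by
      have : 0 < (W.card - 1).choose j' := Nat.choose_pos (by omega)
      exact_mod_cast this
    -- multiply hcount by (j' + 1) and use the identity
    have hmul : ((j' + 1 : ℕ) : ℝ) * (((W.card).choose (j' + 1) : ℝ) * ∑ i ∈ T, a i) ≤
        ((j' + 1 : ℕ) : ℝ) * (((W.card - 1).choose j' : ℝ) * ∑ i ∈ W, a i) := by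
      apply mul_le_mul_of_nonneg_left hcount
      positivity
    have hcast : ((j' + 1 : ℕ) : ℝ) * ((W.card).choose (j' + 1) : ℝ) =
        (W.card : ℝ) * ((W.card - 1).choose j' : ℝ) := by
      rw [← Nat.cast_mul, ← Nat.cast_mul, hid]
    rw [← mul_assoc, ← mul_assoc, hcast] at hmul
    have hfin : ((W.card - 1).choose j' : ℝ) * ((W.card : ℝ) * ∑ i ∈ T, a i) ≤
        ((W.card - 1).choose j' : ℝ) * (((j' + 1 : ℕ) : ℝ) * ∑ i ∈ W, a i) := by
      calc ((W.card - 1).choose j' : ℝ) * ((W.card : ℝ) * ∑ i ∈ T, a i)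
          = (W.card : ℝ) * ((W.card - 1).choose j' : ℝ) * ∑ i ∈ T, a i := by ring
        _ ≤ ((j' + 1 : ℕ) : ℝ) * ((W.card - 1).choose j' : ℝ) * ∑ i ∈ W, a i := hmul
        _ = ((W.card - 1).choose j' : ℝ) * (((j' + 1 : ℕ) : ℝ) * ∑ i ∈ W, a i) := by ring
    have hres := (mul_le_mul_iff_right₀ hCpos).1 hfin
    push_cast at hres ⊢
    linarith

/-- The min-norm point of `baseB f` simultaneously maximizes all `Qk`. -/
lemma main_compare (f : Finset E → ℝ) (hf0 : f ∅ = 0)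
    (hsub : ∀ A B : Finset E, f (A ∪ B) + f (A ∩ B) ≤ f A + f B)
    {u : E → ℝ} (hu : u ∈ baseB f)
    (hmin : ∀ y ∈ baseB f, ∑ i, (u i) ^ 2 ≤ ∑ i, (y i) ^ 2)
    {a : E → ℝ} (ha : a ∈ baseB f)
    (k : ℕ) (hk1 : 1 ≤ k) (hk2 : k ≤ Fintype.card E) :
    Qk a k ≤ Qk u k := by
  -- a minimizing k-subset for u
  obtain ⟨S0, -, hS0⟩ := Finset.exists_subset_card_eq (s := (Finset.univ : Finset E)) (n := k)
    (by simpa using hk2)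
  obtain ⟨Su, hSu, hSumin⟩ := Finset.exists_min_image
    (Finset.powersetCard k (Finset.univ : Finset E)) (fun S => ∑ i ∈ S, u i)
    ⟨S0, Finset.mem_powersetCard_univ.2 hS0⟩
  have hSucard : Su.card = k := Finset.mem_powersetCard_univ.1 hSu
  have hQu : Qk u k = ∑ i ∈ Su, u i := by
    refine le_antisymm (Qk_le u hSucard) ?_
    obtain ⟨S', hS'card, hS'eq⟩ := Qk_exists u hk2
    rw [hS'eq]
    exact hSumin S' (Finset.mem_powersetCard_univ.2 hS'card)
  have hSune : Su.Nonempty := Finset.card_pos.1 (by omega)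
  obtain ⟨i0, hi0, hmax⟩ := Su.exists_max_image u hSune
  set θ : ℝ := u i0 with hθ
  -- every element outside Su has u-value at least θ
  have hout : ∀ j, j ∉ Su → θ ≤ u j := by
    intro j hj
    by_contra hltj
    push_neg at hltj
    set S' : Finset E := insert j (Su.erase i0) with hS'
    have hjer : j ∉ Su.erase i0 := fun hx => hj (Finset.mem_of_mem_erase hx)
    have hS'card : S'.card = k := by
      rw [hS', Finset.card_insert_of_notMem hjer, Finset.card_erase_of_mem hi0, hSucard]
      omega
    have hsum' : ∑ i ∈ S', u i = u j + (∑ i ∈ Su, u i - u i0) := by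
      rw [hS', Finset.sum_insert hjer]
      congr 1
      have := Finset.add_sum_erase Su u hi0
      linarith
    have hge := hSumin S' (Finset.mem_powersetCard_univ.2 hS'card)
    rw [hsum'] at hge
    simp only [hθ] at hltj
    linarith
  set L0 : Finset E := Finset.univ.filter (fun i => u i < θ) with hL0
  set L : Finset E := Finset.univ.filter (fun i => u i ≤ θ) with hLdef
  have hL0Su : L0 ⊆ Su := by
    intro i hi
    simp only [hL0, Finset.mem_filter] at hi
    by_contra hiSu
    exact absurd hi.2 (not_lt.2 (hout i hiSu))
  have hSuL : Su ⊆ L := by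
    intro i hi
    simp only [hLdef, Finset.mem_filter]
    exact ⟨Finset.mem_univ i, hmax i hi⟩
  have hL0L : L0 ⊆ L := by
    intro i hi
    simp only [hL0, Finset.mem_filter] at hi
    simp only [hLdef, Finset.mem_filter]
    exact ⟨hi.1, le_of_lt hi.2⟩
  -- both level sets are tight
  have htL0 : ∑ t ∈ L0, u t = f L0 := by
    apply level_tight f hf0 hsub hu hmin
    intro i hi j hj
    simp only [hL0, Finset.mem_filter] at hi hj
    push_neg at hj
    exact lt_of_lt_of_le hi.2 (hj (Finset.mem_univ j))
  have htL : ∑ t ∈ L, u t = f L := by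
    apply level_tight f hf0 hsub hu hmin
    intro i hi j hj
    simp only [hLdef, Finset.mem_filter] at hi hj
    push_neg at hj
    exact lt_of_le_of_lt hi.2 (hj (Finset.mem_univ j))
  set m : ℕ := L0.card with hm
  set N : ℕ := L.card with hN
  have hmk : m ≤ k := hSucard ▸ Finset.card_le_card hL0Su
  have hkN : k ≤ N := hSucard ▸ Finset.card_le_card hSuL
  -- u is constant θ on Su \ L0 and on L \ L0
  have huval : ∀ i, i ∈ L → i ∉ L0 → u i = θ := by
    intro i hiL hiL0
    simp only [hLdef, Finset.mem_filter] at hiL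
    simp only [hL0, Finset.mem_filter] at hiL0
    push_neg at hiL0
    exact le_antisymm hiL.2 (hiL0 (Finset.mem_univ i))
  have hsumSu : ∑ i ∈ Su, u i = ∑ i ∈ L0, u i + ((k : ℝ) - m) * θ := by
    have hsd : ∑ i ∈ Su \ L0, u i + ∑ i ∈ L0, u i = ∑ i ∈ Su, u i :=
      Finset.sum_sdiff hL0Su
    have hconst : ∑ i ∈ Su \ L0, u i = ((Su \ L0).card : ℝ) * θ := by
      rw [Finset.sum_congr rfl (fun i hi => ?_), Finset.sum_const, nsmul_eq_mul]
      exact huval i (hSuL (Finset.mem_sdiff.1 hi).1) (Finset.mem_sdiff.1 hi).2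
    have hcard : (Su \ L0).card = k - m := by
      rw [Finset.card_sdiff_of_subset hL0Su, hSucard]
    rw [hcard] at hconst
    have : ((k - m : ℕ) : ℝ) = (k : ℝ) - m := by
      push_cast [Nat.cast_sub hmk]
      ring
    rw [this] at hconst
    linarith
  have hsumL : ∑ i ∈ L, u i = ∑ i ∈ L0, u i + ((N : ℝ) - m) * θ := by
    have hsd : ∑ i ∈ L \ L0, u i + ∑ i ∈ L0, u i = ∑ i ∈ L, u i :=
      Finset.sum_sdiff hL0L
    have hconst : ∑ i ∈ L \ L0, u i = ((L \ L0).card : ℝ) * θ := by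
      rw [Finset.sum_congr rfl (fun i hi => ?_), Finset.sum_const, nsmul_eq_mul]
      exact huval i (Finset.mem_sdiff.1 hi).1 (Finset.mem_sdiff.1 hi).2
    have hcard : (L \ L0).card = N - m := by
      rw [Finset.card_sdiff_of_subset hL0L]
    have hmN : m ≤ N := le_trans hmk hkN
    have : ((N - m : ℕ) : ℝ) = (N : ℝ) - m := by
      push_cast [Nat.cast_sub hmN]
      ring
    rw [hcard, this] at hconst
    linarith
  -- choose the k - m smallest a-values inside L \ L0
  set W : Finset E := L \ L0 with hW
  have hWcard : W.card = N - m := by rw [hW, Finset.card_sdiff_of_subset hL0L]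
  have hkmW : k - m ≤ W.card := by omega
  obtain ⟨T0, hT0W, hT0card⟩ := Finset.exists_subset_card_eq (s := W) (n := k - m) hkmW
  obtain ⟨T, hTmem, hTmin⟩ := Finset.exists_min_image
    (Finset.powersetCard (k - m) W) (fun S => ∑ i ∈ S, a i)
    ⟨T0, Finset.mem_powersetCard.2 ⟨hT0W, hT0card⟩⟩
  have hTW : T ⊆ W := (Finset.mem_powersetCard.1 hTmem).1
  have hTcard : T.card = k - m := (Finset.mem_powersetCard.1 hTmem).2
  have havg : (W.card : ℝ) * ∑ i ∈ T, a i ≤ ((k - m : ℕ) : ℝ) * ∑ i ∈ W, a i :=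
    min_subset_avg W a (k - m) T hTmem hTmin
  -- the candidate set for a
  have hdisj : Disjoint L0 T := by
    refine Finset.disjoint_left.2 fun x hx hxT => ?_
    exact (Finset.mem_sdiff.1 (hTW hxT)).2 hx
  have hcard' : (L0 ∪ T).card = k := by
    rw [Finset.card_union_of_disjoint hdisj, hTcard]
    omega
  have hQa : Qk a k ≤ ∑ i ∈ L0, a i + ∑ i ∈ T, a i := by
    have := Qk_le a hcard'
    rwa [Finset.sum_union hdisj] at this
  -- tightness bounds for a
  have haL0 : ∑ i ∈ L0, a i ≤ ∑ i ∈ L0, u i := htL0 ▸ ha.1.2 L0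
  have haL : ∑ i ∈ L, a i ≤ ∑ i ∈ L, u i := htL ▸ ha.1.2 L
  have haW : ∑ i ∈ W, a i = ∑ i ∈ L, a i - ∑ i ∈ L0, a i := by
    have := Finset.sum_sdiff (f := a) hL0L
    rw [hW]
    linarith
  rw [hQu, hsumSu]
  rcases Nat.eq_or_lt_of_le hmk with hmk' | hmlt
  · -- k = m : T is empty
    have hT0 : T = ∅ := Finset.card_eq_zero.1 (by omega)
    rw [hT0, Finset.sum_empty, add_zero] at hQa
    have : ((k : ℝ) - m) = 0 := by
      rw [← hmk']
      ring
    rw [this, zero_mul, add_zero]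
    linarith
  · -- m < k ≤ N
    have hmN : m < N := lt_of_lt_of_le hmlt hkN
    have hNm : (0 : ℝ) < (N : ℝ) - m := by
      have : (m : ℝ) < N := by exact_mod_cast hmN
      linarith
    have hWc : (W.card : ℝ) = (N : ℝ) - m := by
      rw [hWcard]
      push_cast [Nat.cast_sub (le_of_lt hmN)]
      ring
    have hkm : ((k - m : ℕ) : ℝ) = (k : ℝ) - m := by
      push_cast [Nat.cast_sub hmk]
      ring
    rw [hWc, hkm, haW] at havg
    -- from havg : (N - m) * ΣT ≤ (k - m) * (ΣLa - ΣL0a)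
    have hkmle : (k : ℝ) - m ≤ (N : ℝ) - m := by
      have : (k : ℝ) ≤ N := by exact_mod_cast hkN
      linarith
    have hkm0 : (0 : ℝ) ≤ (k : ℝ) - m := by
      have : (m : ℝ) ≤ k := by exact_mod_cast hmk
      linarith
    -- goal : Qk a k ≤ ∑ L0 u + (k - m) θ
    -- key chain multiplied by (N - m) > 0
    have hchain : ((N : ℝ) - m) * (∑ i ∈ L0, a i + ∑ i ∈ T, a i) ≤
        ((N : ℝ) - m) * (∑ i ∈ L0, u i + ((k : ℝ) - m) * θ) := by
      have e1 : ((N : ℝ) - m) * (∑ i ∈ L0, a i + ∑ i ∈ T, a i) =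
          ((N : ℝ) - m) * ∑ i ∈ L0, a i + ((N : ℝ) - m) * ∑ i ∈ T, a i := by ring
      have e2 : ((N : ℝ) - m) * ∑ i ∈ T, a i ≤
          ((k : ℝ) - m) * (∑ i ∈ L, a i - ∑ i ∈ L0, a i) := havg
      have e3 : ∑ i ∈ L, a i ≤ ∑ i ∈ L0, u i + ((N : ℝ) - m) * θ := by
        rw [hsumL] at haL
        linarith
      nlinarith [haL0, hkmle, hkm0, hNm]
    have := le_of_mul_le_mul_left
      (by
        calc ((N : ℝ) - m) * (∑ i ∈ L0, a i + ∑ i ∈ T, a i) ≤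
            ((N : ℝ) - m) * (∑ i ∈ L0, u i + ((k : ℝ) - m) * θ) := hchain)
      hNm
    linarith

/-! ### Topological facts about base polytopes -/

lemma baseB_convex (f : Finset E → ℝ) : Convex ℝ (baseB f) := by
  intro x hx y hy c d hc hd hcd
  have hsum : ∀ S : Finset E, ∑ i ∈ S, (c • x + d • y) i =
      c * ∑ i ∈ S, x i + d * ∑ i ∈ S, y i := by
    intro S
    simp only [Pi.add_apply, Pi.smul_apply, smul_eq_mul]
    rw [Finset.sum_add_distrib, Finset.mul_sum, Finset.mul_sum]
  refine ⟨⟨fun i => ?_, fun S => ?_⟩, ?_⟩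
  · simp only [Pi.add_apply, Pi.smul_apply, smul_eq_mul]
    exact add_nonneg (mul_nonneg hc (hx.1.1 i)) (mul_nonneg hd (hy.1.1 i))
  · rw [hsum S]
    have h1 := mul_le_mul_of_nonneg_left (hx.1.2 S) hc
    have h2 := mul_le_mul_of_nonneg_left (hy.1.2 S) hd
    have h3 : c * f S + d * f S = f S := by rw [← add_mul, hcd, one_mul]
    linarith
  · rw [hsum Finset.univ, hx.2, hy.2, ← add_mul, hcd, one_mul]

lemma baseB_isClosed (f : Finset E → ℝ) : IsClosed (baseB f) := by
  have hrw : baseB f = (⋂ i : E, {x : E → ℝ | 0 ≤ x i}) ∩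
      ((⋂ S : Finset E, {x : E → ℝ | ∑ i ∈ S, x i ≤ f S}) ∩
        {x : E → ℝ | ∑ i, x i = f Finset.univ}) := by
    ext x
    simp only [baseB, indepP, Set.mem_inter_iff, Set.mem_iInter, Set.mem_setOf_eq,
      Set.mem_sep_iff]
    tauto
  rw [hrw]
  refine (isClosed_iInter fun i => isClosed_le continuous_const (continuous_apply i)).inter
    ((isClosed_iInter fun S => isClosed_le
        (continuous_finset_sum S fun i _ => continuous_apply i) continuous_const).inter
      (isClosed_eq (continuous_finset_sum _ fun i _ => continuous_apply i) continuous_const))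

lemma baseB_isCompact (f : Finset E → ℝ) : IsCompact (baseB f) := by
  refine IsCompact.of_isClosed_subset
    (isCompact_univ_pi fun i : E => isCompact_Icc (a := (0:ℝ)) (b := f {i}))
    (baseB_isClosed f) ?_
  intro x hx
  rw [Set.mem_univ_pi]
  intro i
  exact ⟨hx.1.1 i, by simpa using hx.1.2 {i}⟩

lemma exists_sorted_enum (w : E → ℝ) :
    ∃ e : Fin (Fintype.card E) ≃ E,
      ∀ s t : Fin (Fintype.card E), s ≤ t → w (e t) ≤ w (e s) := by
  let q : Fin (Fintype.card E) ≃ E := (Fintype.equivFin E).symm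
  let σ' := Tuple.sort (fun t => -w (q t))
  refine ⟨(σ' : Equiv.Perm (Fin (Fintype.card E))).trans q, fun s t hst => ?_⟩
  have hmono := Tuple.monotone_sort (fun t => -w (q t)) hst
  simp only [Function.comp_apply] at hmono
  simp only [Equiv.trans_apply]
  linarith

end Aux

theorem stmt_5 {E : Type*} [Fintype E] [DecidableEq E]
    {σ : Type*} [Fintype σ]
    (p : σ → ℝ) (hp : ∀ s, 0 ≤ p s) (hpsum : ∑ s, p s = 1)
    (g : σ → Finset E → ℝ)
    (hg0 : ∀ s, g s ∅ = 0)
    (hgmono : ∀ s, ∀ A B : Finset E, A ⊆ B → g s A ≤ g s B)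
    (hgsub : ∀ s, ∀ A B : Finset E, g s (A ∪ B) + g s (A ∩ B) ≤ g s A + g s B)
    (A : Set (E → ℝ))
    (hA : A = {a | ∃ u : σ → E → ℝ, (∀ s, u s ∈ baseB (g s)) ∧
      a = fun i => ∑ s, p s * u s i}) :
    ∃ u ∈ A, ∀ a ∈ A, ∀ k : ℕ,
      1 ≤ k → k ≤ Fintype.card E → Qk a k ≤ Qk u k := by
  classical
  set f : Finset E → ℝ := fun S => ∑ s, p s * g s S with hf
  have hf0 : f ∅ = 0 := by simp [hf, hg0]
  have hfmono : ∀ A B : Finset E, A ⊆ B → f A ≤ f B := by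
    intro A B hAB
    exact Finset.sum_le_sum fun s _ => mul_le_mul_of_nonneg_left (hgmono s A B hAB) (hp s)
  have hfsub : ∀ A B : Finset E, f (A ∪ B) + f (A ∩ B) ≤ f A + f B := by
    intro A B
    simp only [hf]
    rw [← Finset.sum_add_distrib, ← Finset.sum_add_distrib]
    refine Finset.sum_le_sum fun s _ => ?_
    have h := mul_le_mul_of_nonneg_left (hgsub s A B) (hp s)
    nlinarith [h]
  have hAsub : A ⊆ baseB f := by
    rw [hA]
    rintro a ⟨v, hv, rfl⟩
    refine ⟨⟨fun i => ?_, fun S => ?_⟩, ?_⟩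
    · exact Finset.sum_nonneg fun s _ => mul_nonneg (hp s) ((hv s).1.1 i)
    · rw [Finset.sum_comm]
      refine Finset.sum_le_sum fun s _ => ?_
      rw [← Finset.mul_sum]
      exact mul_le_mul_of_nonneg_left ((hv s).1.2 S) (hp s)
    · rw [Finset.sum_comm]
      simp only [hf]
      refine Finset.sum_congr rfl fun s _ => ?_
      rw [← Finset.mul_sum, (hv s).2]
  have hAconv : Convex ℝ A := by
    rw [hA]
    rintro a ⟨va, hva, rfl⟩ b ⟨vb, hvb, rfl⟩ c d hc hd hcd
    refine ⟨fun s => c • va s + d • vb s,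
      fun s => baseB_convex (g s) (hva s) (hvb s) hc hd hcd, ?_⟩
    funext i
    simp only [Pi.add_apply, Pi.smul_apply, smul_eq_mul]
    rw [Finset.mul_sum, Finset.mul_sum, ← Finset.sum_add_distrib]
    exact Finset.sum_congr rfl fun s _ => by ring
  have hAcompact : IsCompact A := by
    have hK : IsCompact (Set.pi Set.univ fun s : σ => baseB (g s)) :=
      isCompact_univ_pi fun s => baseB_isCompact (g s)
    have hΦ : Continuous fun (v : σ → E → ℝ) (i : E) => ∑ s, p s * v s i := by
      refine continuous_pi fun i => ?_
      refine continuous_finset_sum _ fun s _ => ?_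
      exact continuous_const.mul ((continuous_apply i).comp (continuous_apply s))
    have himg : A = (fun (v : σ → E → ℝ) (i : E) => ∑ s, p s * v s i) ''
        (Set.pi Set.univ fun s => baseB (g s)) := by
      rw [hA]; ext a
      simp only [Set.mem_image, Set.mem_pi, Set.mem_univ, forall_true_left, Set.mem_setOf_eq]
      constructor
      · rintro ⟨v, hv, rfl⟩; exact ⟨v, hv, rfl⟩
      · rintro ⟨v, hv, h⟩; exact ⟨v, hv, h.symm⟩
    rw [himg]
    exact hK.image hΦ
  have hAclosed : IsClosed A := hAcompact.isClosed
  have hgrA : ∀ e : Fin (Fintype.card E) ≃ E, gr f e ∈ A := by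
    intro e
    rw [hA]
    refine ⟨fun s => gr (g s) e,
      fun s => gr_mem_base (g s) (hg0 s) (hgmono s) (hgsub s) e, ?_⟩
    funext i
    show gr f e i = ∑ s, p s * gr (g s) e i
    simp only [gr, hf]
    rw [← Finset.sum_sub_distrib]
    exact Finset.sum_congr rfl fun s _ => (mul_sub (p s) _ _).symm
  have hBsubA : baseB f ⊆ A := by
    intro x hx
    by_contra hxA
    obtain ⟨φ, c, hcA, hcx⟩ := geometric_hahn_banach_closed_point hAconv hAclosed hxA
    set w : E → ℝ := fun i => φ (fun j => if i = j then 1 else 0) with hw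
    have hφ : ∀ y : E → ℝ, φ y = ∑ i, y i * w i := by
      intro y
      conv_lhs => rw [pi_eq_sum_univ y]
      rw [map_sum]
      exact Finset.sum_congr rfl fun i _ => by rw [map_smul, smul_eq_mul, hw]
    obtain ⟨e, he⟩ := exists_sorted_enum w
    have hopt : φ x ≤ φ (gr f e) := by
      rw [hφ x, hφ (gr f e)]
      have hgo := gr_opt f hf0 e w he hx
      calc ∑ i, x i * w i = ∑ i, w i * x i :=
            Finset.sum_congr rfl fun i _ => mul_comm _ _
        _ ≤ ∑ i, w i * gr f e i := hgo
        _ = ∑ i, gr f e i * w i := Finset.sum_congr rfl fun i _ => mul_comm _ _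
    have hlt := hcA (gr f e) (hgrA e)
    linarith
  have hne : (baseB f).Nonempty :=
    ⟨gr f ((Fintype.equivFin E).symm), gr_mem_base f hf0 hfmono hfsub _⟩
  have hcont : Continuous fun x : E → ℝ => ∑ i, (x i) ^ 2 :=
    continuous_finset_sum _ fun i _ => (continuous_apply i).pow 2
  obtain ⟨u, huB, humin⟩ := (baseB_isCompact f).exists_isMinOn hne hcont.continuousOn
  have humin' : ∀ y ∈ baseB f, ∑ i, (u i) ^ 2 ≤ ∑ i, (y i) ^ 2 := fun y hy => humin hy
  refine ⟨u, hBsubA huB, ?_⟩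
  intro a haA k hk1 hk2
  exact main_compare f hf0 hfsub huB humin' (hAsub haA) k hk1 hk2
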